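/- Let J' and M' be even integral symmetric matrices of sizes r×r and d×d respectively (r, d > 0), both invertible modulo 2. Then G_{J',M'}(2) = Σ_{x ∈ (ℤ/2ℤ)^{r×d}} exp(πi·Tr(ᵗx J' x M')) = 2^{rd/2}. In particular r and d are both even. -/

import Mathlib

open Matrix

/-- The generalized Gauss sum `G_{J,M}(NN) = Σ_{x mod NN} exp(πi·Tr(ᵗx J x M)/NN)`. -/
noncomputable def GS (r d NN : ℕ) (J : Matrix (Fin r) (Fin r) ℤ)
    (M : Matrix (Fin d) (Fin d) ℤ) : ℂ :=
  ∑ x : Matrix (Fin r) (Fin d) (Fin NN),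
    Complex.exp ((Real.pi : ℂ) * Complex.I *
      (((Matrix.trace ((x.map fun a => ((a : ℕ) : ℤ))ᵀ * J *
          (x.map fun a => ((a : ℕ) : ℤ)) * M) : ℤ) : ℂ) / (NN : ℂ)))

open Finset


/-- If `f i j + f j i = 0` for `i ≠ j`, the double sum reduces to the diagonal. -/
lemma sum_eq_diag_of_pair {ι R : Type*} [Fintype ι] [DecidableEq ι] [AddCommGroup R]
    (f : ι → ι → R) (h : ∀ i j, i ≠ j → f i j + f j i = 0) :
    ∑ i, ∑ j, f i j = ∑ i, f i i := by
  classical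
  have h1 : ∑ i, ∑ j, f i j = ∑ p ∈ Finset.univ ×ˢ Finset.univ, f p.1 p.2 := by
    rw [Finset.sum_product]
  have h2 : (Finset.univ ×ˢ Finset.univ : Finset (ι × ι)) =
      Finset.univ.diag ∪ Finset.univ.offDiag := (Finset.diag_union_offDiag _).symm
  rw [h1, h2, Finset.sum_union (Finset.disjoint_diag_offDiag _)]
  have h3 : ∑ p ∈ Finset.univ.offDiag, f p.1 p.2 = 0 := by
    refine Finset.sum_involution (fun p _ => p.swap) ?_ ?_ ?_ ?_
    · intro a ha
      rw [Finset.mem_offDiag] at ha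
      exact h a.1 a.2 ha.2.2
    · intro a ha _
      rw [Finset.mem_offDiag] at ha
      intro hc
      have := congrArg Prod.fst hc
      simp only [Prod.fst_swap] at this
      exact ha.2.2 this.symm
    · intro a ha
      rw [Finset.mem_offDiag] at ha ⊢
      exact ⟨Finset.mem_univ _, Finset.mem_univ _, fun hc => ha.2.2 hc.symm⟩
    · intro a _; simp
  rw [h3, add_zero]
  rw [Finset.sum_diag]

/-- Divisibility of a symmetric-style double sum given divisibility on
diagonal and symmetrized off-diagonal entries. -/
lemma dvd_double_sum {ι : Type*} [Fintype ι] [DecidableEq ι] (n : ℕ) [NeZero n]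
    (f : ι → ι → ℤ) (hoff : ∀ i j, i ≠ j → (n:ℤ) ∣ f i j + f j i)
    (hdiag : ∀ i, (n:ℤ) ∣ f i i) : (n:ℤ) ∣ ∑ i, ∑ j, f i j := by
  have key := sum_eq_diag_of_pair (fun i j => ((f i j : ℤ) : ZMod n)) (by
    intro i j hij
    have : (((f i j + f j i : ℤ)) : ZMod n) = 0 :=
      (ZMod.intCast_zmod_eq_zero_iff_dvd _ n).2 (hoff i j hij)
    push_cast at this
    exact this)
  rw [← ZMod.intCast_zmod_eq_zero_iff_dvd]
  push_cast
  rw [key]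
  refine Finset.sum_eq_zero fun i _ => ?_
  exact (ZMod.intCast_zmod_eq_zero_iff_dvd _ n).2 (hdiag i)


section IntLevel

variable {r d : ℕ} (J : Matrix (Fin r) (Fin r) ℤ) (M : Matrix (Fin d) (Fin d) ℤ)

lemma entryExpand (x y : Matrix (Fin r) (Fin d) ℤ) (k l : Fin d) :
    (xᵀ * J * y) k l = ∑ i, ∑ j, x i k * J i j * y j l := by
  simp only [Matrix.mul_apply, Matrix.transpose_apply, Finset.sum_mul]
  rw [Finset.sum_comm]

lemma traceExpand (x y : Matrix (Fin r) (Fin d) ℤ) :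
    Matrix.trace (xᵀ * J * y * M) =
      ∑ k, ∑ l, (∑ i, ∑ j, x i k * J i j * y j l) * M l k := by
  have h : Matrix.trace (xᵀ * J * y * M) = ∑ k, ∑ l, (xᵀ * J * y) k l * M l k := by
    simp only [Matrix.trace, Matrix.diag, Matrix.mul_apply]
  rw [h]
  exact Finset.sum_congr rfl fun k _ => Finset.sum_congr rfl fun l _ => by
    rw [entryExpand]

lemma colDot_symm (hJs : J.IsSymm) (x : Matrix (Fin r) (Fin d) ℤ) (k l : Fin d) :
    (∑ i, ∑ j, x i k * J i j * x j l) = ∑ i, ∑ j, x i l * J i j * x j k := by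
  rw [Finset.sum_comm]
  refine Finset.sum_congr rfl fun j _ => Finset.sum_congr rfl fun i _ => ?_
  rw [show J j i = J i j from hJs.apply i j]
  ring

/-- The quadratic trace is always even when `J, M` are even symmetric. -/
lemma trace_even (hJs : J.IsSymm) (hMs : M.IsSymm) (hMe : ∀ i, 2 ∣ M i i)
    (x : Matrix (Fin r) (Fin d) ℤ) :
    2 ∣ Matrix.trace (xᵀ * J * x * M) := by
  rw [traceExpand]
  have h2 : ((2:ℕ):ℤ) ∣ ∑ k, ∑ l, (fun k l =>
      (∑ i, ∑ j, x i k * J i j * x j l) * M l k) k l := by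
    refine dvd_double_sum 2 _ ?_ ?_
    · intro k l hkl
      show ((2:ℕ):ℤ) ∣ (∑ i, ∑ j, x i k * J i j * x j l) * M l k +
        (∑ i, ∑ j, x i l * J i j * x j k) * M k l
      rw [← colDot_symm J hJs x k l, show M k l = M l k from hMs.apply l k]
      push_cast
      exact ⟨(∑ i, ∑ j, x i k * J i j * x j l) * M l k, by ring⟩
    · intro k
      show ((2:ℕ):ℤ) ∣ (∑ i, ∑ j, x i k * J i j * x j k) * M k k
      push_cast
      exact Dvd.dvd.mul_left (hMe k) _
  simpa using h2

/-- If all column dot products are even, the trace is divisible by 4. -/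
lemma trace_four (hJs : J.IsSymm) (hMs : M.IsSymm) (hMe : ∀ i, 2 ∣ M i i)
    (x : Matrix (Fin r) (Fin d) ℤ)
    (hcol : ∀ k l, 2 ∣ ∑ i, ∑ j, x i k * J i j * x j l) :
    4 ∣ Matrix.trace (xᵀ * J * x * M) := by
  rw [traceExpand]
  have h2 : ((4:ℕ):ℤ) ∣ ∑ k, ∑ l, (fun k l =>
      (∑ i, ∑ j, x i k * J i j * x j l) * M l k) k l := by
    refine dvd_double_sum 4 _ ?_ ?_
    · intro k l hkl
      show ((4:ℕ):ℤ) ∣ (∑ i, ∑ j, x i k * J i j * x j l) * M l k +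
        (∑ i, ∑ j, x i l * J i j * x j k) * M k l
      rw [← colDot_symm J hJs x k l, show M k l = M l k from hMs.apply l k]
      obtain ⟨c, hc⟩ := hcol k l
      rw [hc]
      exact ⟨c * M l k, by push_cast; ring⟩
    · intro k
      show ((4:ℕ):ℤ) ∣ (∑ i, ∑ j, x i k * J i j * x j k) * M k k
      obtain ⟨c, hc⟩ := hcol k k
      obtain ⟨m, hm⟩ := hMe k
      rw [hc, hm]
      exact ⟨c * m, by push_cast; ring⟩
  simpa using h2

lemma two_dvd_iff_cast (a : ℤ) : 2 ∣ a ↔ ((a : ZMod 2) = 0) := by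
  rw [ZMod.intCast_zmod_eq_zero_iff_dvd a 2]; norm_num

lemma traceCross (hJs : J.IsSymm) (hMs : M.IsSymm) (x y : Matrix (Fin r) (Fin d) ℤ) :
    Matrix.trace (yᵀ * J * x * M) = Matrix.trace (xᵀ * J * y * M) := by
  have h1 : Matrix.trace (yᵀ * J * x * M) = Matrix.trace ((yᵀ * J * x * M)ᵀ) :=
    (Matrix.trace_transpose _).symm
  rw [h1]
  have h2 : (yᵀ * J * x * M)ᵀ = Mᵀ * (xᵀ * (Jᵀ * y)) := by
    simp [Matrix.transpose_mul, Matrix.mul_assoc]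
  rw [h2, hJs.eq, hMs.eq]
  rw [show M * (xᵀ * (J * y)) = M * (xᵀ * J * y) by rw [Matrix.mul_assoc],
    Matrix.trace_mul_comm, Matrix.mul_assoc]

/-- Bilinear expansion of the quadratic trace. -/
lemma traceAdd (hJs : J.IsSymm) (hMs : M.IsSymm) (x y : Matrix (Fin r) (Fin d) ℤ) :
    Matrix.trace ((x + y)ᵀ * J * (x + y) * M) =
      Matrix.trace (xᵀ * J * x * M) + Matrix.trace (yᵀ * J * y * M) +
        2 * Matrix.trace (xᵀ * J * y * M) := by
  have hcross := traceCross J M hJs hMs x y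
  simp only [Matrix.transpose_add, Matrix.add_mul, Matrix.mul_add, Matrix.trace_add]
  rw [hcross]; ring

/-- Change of the quadratic trace under shift by twice a matrix. -/
lemma traceShift (hJs : J.IsSymm) (hMs : M.IsSymm) (x w : Matrix (Fin r) (Fin d) ℤ) :
    Matrix.trace ((x + (2:ℤ) • w)ᵀ * J * (x + (2:ℤ) • w) * M) =
      Matrix.trace (xᵀ * J * x * M) +
        4 * (Matrix.trace (wᵀ * J * w * M) + Matrix.trace (xᵀ * J * w * M)) := by
  rw [traceAdd J M hJs hMs]
  have h1 : Matrix.trace (((2:ℤ) • w)ᵀ * J * ((2:ℤ) • w) * M) =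
      4 * Matrix.trace (wᵀ * J * w * M) := by
    simp only [Matrix.transpose_smul, Matrix.smul_mul, Matrix.mul_smul, smul_smul,
      Matrix.trace_smul, smul_eq_mul]
    ring
  have h2 : Matrix.trace (xᵀ * J * ((2:ℤ) • w) * M) =
      2 * Matrix.trace (xᵀ * J * w * M) := by
    simp only [Matrix.mul_smul, Matrix.smul_mul, Matrix.trace_smul, smul_eq_mul]
  rw [h1, h2]; ring

end IntLevel

section FLevel

variable {r d : ℕ} (J : Matrix (Fin r) (Fin r) ℤ) (M : Matrix (Fin d) (Fin d) ℤ)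

/-- The bilinear pairing over `ZMod 2` given by an integer matrix `J`. -/
def PhiF (J : Matrix (Fin r) (Fin r) ℤ) (u v : Fin r → ZMod 2) : ZMod 2 :=
  ∑ i, ∑ j, u i * (J i j : ZMod 2) * v j

lemma PhiF_symm (hJs : J.IsSymm) (u v : Fin r → ZMod 2) : PhiF J u v = PhiF J v u := by
  unfold PhiF
  rw [Finset.sum_comm]
  refine Finset.sum_congr rfl fun j _ => Finset.sum_congr rfl fun i _ => ?_
  rw [show J j i = J i j from hJs.apply i j]
  ring

lemma PhiF_self (hJs : J.IsSymm) (hJe : ∀ i, 2 ∣ J i i) (v : Fin r → ZMod 2) :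
    PhiF J v v = 0 := by
  unfold PhiF
  rw [sum_eq_diag_of_pair (fun i j => v i * (J i j : ZMod 2) * v j) (by
    intro i j hij
    show v i * (J i j : ZMod 2) * v j + v j * (J j i : ZMod 2) * v i = 0
    rw [show J j i = J i j from hJs.apply i j]
    have : v i * (J i j : ZMod 2) * v j = v j * (J i j : ZMod 2) * v i := by ring
    rw [this]
    exact CharTwo.add_self_eq_zero _)]
  refine Finset.sum_eq_zero fun i _ => ?_
  rw [(ZMod.intCast_zmod_eq_zero_iff_dvd (J i i) 2).2 (hJe i)]
  ring

lemma PhiF_add_left (u u' v : Fin r → ZMod 2) :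
    PhiF J (u + u') v = PhiF J u v + PhiF J u' v := by
  unfold PhiF
  rw [← Finset.sum_add_distrib]
  refine Finset.sum_congr rfl fun i _ => ?_
  rw [← Finset.sum_add_distrib]
  exact Finset.sum_congr rfl fun j _ => by simp only [Pi.add_apply]; ring

lemma PhiF_smul_left (c : ZMod 2) (u v : Fin r → ZMod 2) :
    PhiF J (c • u) v = c * PhiF J u v := by
  unfold PhiF
  rw [Finset.mul_sum]
  refine Finset.sum_congr rfl fun i _ => ?_
  rw [Finset.mul_sum]
  exact Finset.sum_congr rfl fun j _ => by simp only [Pi.smul_apply, smul_eq_mul]; ring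

lemma PhiF_add_right (u v v' : Fin r → ZMod 2) :
    PhiF J u (v + v') = PhiF J u v + PhiF J u v' := by
  unfold PhiF
  rw [← Finset.sum_add_distrib]
  refine Finset.sum_congr rfl fun i _ => ?_
  rw [← Finset.sum_add_distrib]
  exact Finset.sum_congr rfl fun j _ => by simp only [Pi.add_apply]; ring

lemma PhiF_smul_right (c : ZMod 2) (u v : Fin r → ZMod 2) :
    PhiF J u (c • v) = c * PhiF J u v := by
  unfold PhiF
  rw [Finset.mul_sum]
  refine Finset.sum_congr rfl fun i _ => ?_
  rw [Finset.mul_sum]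
  exact Finset.sum_congr rfl fun j _ => by simp only [Pi.smul_apply, smul_eq_mul]; ring

/-- A maximal `PhiF`-isotropic submodule exists. -/
lemma exists_max_isotropic (hJs : J.IsSymm) (hJe : ∀ i, 2 ∣ J i i) :
    ∃ W : Submodule (ZMod 2) (Fin r → ZMod 2),
      (∀ u ∈ W, ∀ v ∈ W, PhiF J u v = 0) ∧
      (∀ v, (∀ w ∈ W, PhiF J w v = 0) → v ∈ W) := by
  classical
  let S : Set (Submodule (ZMod 2) (Fin r → ZMod 2)) :=
    {W | ∀ u ∈ W, ∀ v ∈ W, PhiF J u v = 0}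
  have hfin : S.Finite := Set.toFinite S
  have hne : S.Nonempty := ⟨⊥, by
    intro u hu v hv
    rw [Submodule.mem_bot] at hu
    subst hu
    unfold PhiF
    refine Finset.sum_eq_zero fun i _ => Finset.sum_eq_zero fun j _ => by simp⟩
  obtain ⟨W, hWS, hWmax0⟩ := hfin.exists_maximal hne
  have hWmax : ∀ a ∈ S, W ≤ a → W = a := fun a ha hle => le_antisymm hle (hWmax0 ha hle)
  refine ⟨W, hWS, ?_⟩
  intro v hv
  have hiso : (W ⊔ Submodule.span (ZMod 2) {v}) ∈ S := by
    intro a ha b hb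
    rw [Submodule.mem_sup] at ha hb
    obtain ⟨w1, hw1, z1, hz1, rfl⟩ := ha
    obtain ⟨w2, hw2, z2, hz2, rfl⟩ := hb
    rw [Submodule.mem_span_singleton] at hz1 hz2
    obtain ⟨c1, rfl⟩ := hz1
    obtain ⟨c2, rfl⟩ := hz2
    have h1 : PhiF J v w2 = 0 := by rw [PhiF_symm J hJs]; exact hv w2 hw2
    have h2 : PhiF J w1 v = 0 := hv w1 hw1
    have h3 : PhiF J w1 w2 = 0 := hWS w1 hw1 w2 hw2
    have h4 : PhiF J v v = 0 := PhiF_self J hJs hJe v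
    simp only [PhiF_add_left, PhiF_add_right, PhiF_smul_left, PhiF_smul_right,
      h1, h2, h3, h4, mul_zero, add_zero, zero_add]
  have hle : W ≤ W ⊔ Submodule.span (ZMod 2) {v} := le_sup_left
  have heq := hWmax _ hiso hle
  have hvmem : v ∈ W ⊔ Submodule.span (ZMod 2) {v} :=
    Submodule.mem_sup_right (Submodule.mem_span_singleton_self v)
  rw [show W ⊔ Submodule.span (ZMod 2) {v} = W from (id heq).symm] at hvmem
  exact hvmem

end FLevel

section MatLevel

variable {r d : ℕ}

lemma val_intCast_two : ∀ a : ZMod 2, (((a.val : ℤ)) : ZMod 2) = a := by decide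

/-- Integer lift of a mod-2 matrix. -/
def intLift (x : Matrix (Fin r) (Fin d) (ZMod 2)) : Matrix (Fin r) (Fin d) ℤ :=
  x.map (fun a => (a.val : ℤ))

variable (J : Matrix (Fin r) (Fin r) ℤ) (M : Matrix (Fin d) (Fin d) ℤ)

/-- The mod 2 reduction of the integral pairing trace. -/
lemma castCC (x y : Matrix (Fin r) (Fin d) (ZMod 2)) :
    ((Matrix.trace ((intLift x)ᵀ * J * (intLift y) * M) : ℤ) : ZMod 2) =
      ∑ k, ∑ l, (∑ i, ∑ j, x i k * (J i j : ZMod 2) * y j l) * (M l k : ZMod 2) := by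
  rw [traceExpand]
  push_cast
  refine Finset.sum_congr rfl fun k _ => Finset.sum_congr rfl fun l _ => ?_
  congr 1
  refine Finset.sum_congr rfl fun i _ => Finset.sum_congr rfl fun j _ => ?_
  simp only [intLift, Matrix.map_apply, Int.cast_mul, val_intCast_two]

lemma vanish_of_mulVec {n : ℕ} (A : Matrix (Fin n) (Fin n) (ZMod 2))
    (h : IsUnit A.det) (v : Fin n → ZMod 2) (hv : A *ᵥ v = 0) : v = 0 := by
  have := A.invertibleOfIsUnitDet h
  calc v = (⅟A * A) *ᵥ v := by rw [invOf_mul_self, Matrix.one_mulVec]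
  _ = ⅟A *ᵥ (A *ᵥ v) := by rw [Matrix.mulVec_mulVec]
  _ = 0 := by rw [hv, Matrix.mulVec_zero]

lemma PhiF_single (u : Fin r → ZMod 2) (j0 : Fin r) :
    PhiF J u (Pi.single j0 1) = ((J.map (Int.cast : ℤ → ZMod 2))ᵀ *ᵥ u) j0 := by
  unfold PhiF
  have h1 : ∀ i, ∑ j, u i * (J i j : ZMod 2) * (Pi.single j0 1 : Fin r → ZMod 2) j
      = u i * (J i j0 : ZMod 2) := by
    intro i
    rw [Finset.sum_eq_single j0]
    · simp
    · intro b _ hb; simp [Pi.single_apply, hb]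
    · simp
  simp only [h1]
  simp [Matrix.mulVec, dotProduct, Matrix.transpose_apply, Matrix.map_apply, mul_comm]

/-- Nondegeneracy of `PhiF` when `J` is invertible mod 2. -/
lemma PhiF_nondeg (hJu : IsUnit ((J.map (Int.cast : ℤ → ZMod 2)).det))
    (u : Fin r → ZMod 2) (h : ∀ c, PhiF J u c = 0) : u = 0 := by
  have hdet : IsUnit ((J.map (Int.cast : ℤ → ZMod 2))ᵀ).det := by
    rwa [Matrix.det_transpose]
  refine vanish_of_mulVec _ hdet u ?_
  funext j0
  rw [← PhiF_single J u j0]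
  simp [h]

/-- The submodule of matrices all of whose columns lie in `W`. -/
def WMsub (W : Submodule (ZMod 2) (Fin r → ZMod 2)) :
    Submodule (ZMod 2) (Matrix (Fin r) (Fin d) (ZMod 2)) where
  carrier := {x | ∀ k, (fun i => x i k) ∈ W}
  add_mem' := by
    intro x y hx hy k
    exact W.add_mem (hx k) (hy k)
  zero_mem' := by
    intro k
    exact W.zero_mem
  smul_mem' := by
    intro c x hx k
    exact W.smul_mem c (hx k)

/-- Rank-one matrix supported on column `k0`. -/
def cT (c : Fin r → ZMod 2) (k0 : Fin d) : Matrix (Fin r) (Fin d) (ZMod 2) :=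
  Matrix.of fun i l => if l = k0 then c i else 0

lemma cT_mem (W : Submodule (ZMod 2) (Fin r → ZMod 2)) (c : Fin r → ZMod 2)
    (hc : c ∈ W) (k0 : Fin d) : cT c k0 ∈ (WMsub W : Submodule _ (Matrix (Fin r) (Fin d) (ZMod 2))) := by
  intro k
  by_cases h : k = k0
  · subst h
    have : (fun i => cT c k i k) = c := by funext i; simp [cT]
    rw [this]; exact hc
  · have h0 : (fun i => cT c k0 i k) = (0 : Fin r → ZMod 2) := by
      funext i; simp [cT, h]
    rw [h0]; exact W.zero_mem

lemma cT_col (c : Fin r → ZMod 2) (k0 k : Fin d) :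
    (fun i => cT c k0 i k) = if k = k0 then c else 0 := by
  funext i
  by_cases h : k = k0 <;> simp [cT, h]

/-- Evaluation of the mod-2 pairing against a rank one matrix. -/
lemma castCC_cT (x : Matrix (Fin r) (Fin d) (ZMod 2)) (c : Fin r → ZMod 2) (k0 : Fin d) :
    ((Matrix.trace ((intLift x)ᵀ * J * (intLift (cT c k0)) * M) : ℤ) : ZMod 2) =
      ∑ k, PhiF J (fun i => x i k) c * (M k0 k : ZMod 2) := by
  rw [castCC]
  rw [Finset.sum_comm]
  rw [Finset.sum_eq_single k0]
  · refine Finset.sum_congr rfl fun k _ => ?_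
    congr 1
    unfold PhiF
    refine Finset.sum_congr rfl fun i _ => Finset.sum_congr rfl fun j _ => by simp [cT]
  · intro l _ hl
    refine Finset.sum_eq_zero fun k _ => ?_
    have : (∑ i, ∑ j, x i k * (J i j : ZMod 2) * cT c k0 j l) = 0 := by
      refine Finset.sum_eq_zero fun i _ => Finset.sum_eq_zero fun j _ => by simp [cT, hl]
    rw [this, zero_mul]
  · simp

end MatLevel

section EpsLevel

variable {r d : ℕ} (J : Matrix (Fin r) (Fin r) ℤ) (M : Matrix (Fin d) (Fin d) ℤ)

/-- The integral pairing of two mod 2 matrices. -/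
def CCC (x y : Matrix (Fin r) (Fin d) (ZMod 2)) : ℤ :=
  Matrix.trace ((intLift x)ᵀ * J * intLift y * M)

/-- The Gauss sum character. -/
noncomputable def epsF (x : Matrix (Fin r) (Fin d) (ZMod 2)) : ℂ :=
  Complex.I ^ (CCC J M x x)

lemma negOne_add (a b : ℤ) : (-1:ℂ)^(a+b) = (-1:ℂ)^a * (-1:ℂ)^b :=
  zpow_add₀ (by norm_num) a b

lemma negOne_even {n : ℤ} (h : 2 ∣ n) : (-1:ℂ)^n = 1 := by
  obtain ⟨k, rfl⟩ := h
  rw [_root_.zpow_mul, show ((-1:ℂ)^(2:ℤ)) = 1 by norm_num, _root_.one_zpow]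

lemma negOne_odd {n : ℤ} (h : ¬ 2 ∣ n) : (-1:ℂ)^n = -1 := by
  obtain ⟨k, rfl⟩ : ∃ k, n = 2*k+1 := Int.not_even_iff_odd.1 (fun he => h he.two_dvd)
  rw [negOne_add, _root_.zpow_mul, show ((-1:ℂ)^(2:ℤ)) = 1 by norm_num, _root_.one_zpow, one_mul, zpow_one]

lemma I_zpow_four_mul (c : ℤ) : Complex.I ^ ((4:ℤ)*c) = 1 := by
  rw [_root_.zpow_mul, show Complex.I^(4:ℤ) = 1 by rw [show (4:ℤ) = (4:ℕ) from rfl, zpow_natCast, Complex.I_pow_four], _root_.one_zpow]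

lemma I_zpow_two_mul (c : ℤ) : Complex.I ^ ((2:ℤ)*c) = (-1:ℂ)^c := by
  rw [_root_.zpow_mul, zpow_two, Complex.I_mul_I]

lemma intLift_add (x y : Matrix (Fin r) (Fin d) (ZMod 2)) :
    intLift (x + y) = intLift x + intLift y +
      (2:ℤ) • (Matrix.of fun i k => -(((x i k).val : ℤ) * ((y i k).val : ℤ))) := by
  have key : ∀ a b : ZMod 2, (((a+b).val : ℤ)) = (a.val : ℤ) + b.val + 2 * (-((a.val:ℤ) * b.val)) := by
    decide
  ext i k
  simp only [intLift, Matrix.map_apply, Matrix.add_apply, Matrix.smul_apply, Matrix.of_apply,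
    smul_eq_mul]
  exact key (x i k) (y i k)

/-- Cocycle property of the Gauss character. -/
lemma epsF_add (hJs : J.IsSymm) (hMs : M.IsSymm)
    (x y : Matrix (Fin r) (Fin d) (ZMod 2)) :
    epsF J M (x + y) = epsF J M x * epsF J M y * (-1:ℂ)^(CCC J M x y) := by
  unfold epsF CCC
  rw [intLift_add]
  set z := (Matrix.of fun i k => -(((x i k).val : ℤ) * ((y i k).val : ℤ)) :
    Matrix (Fin r) (Fin d) ℤ) with hz
  rw [traceShift J M hJs hMs (intLift x + intLift y) z, traceAdd J M hJs hMs]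
  set a := Matrix.trace ((intLift x)ᵀ * J * intLift x * M)
  set b := Matrix.trace ((intLift y)ᵀ * J * intLift y * M)
  set c := Matrix.trace ((intLift x)ᵀ * J * intLift y * M)
  set e := Matrix.trace (zᵀ * J * z * M) + Matrix.trace ((intLift x + intLift y)ᵀ * J * z * M)
  rw [show a + b + 2*c + 4*e = (a + b) + ((2:ℤ)*c + (4:ℤ)*e) by ring]
  rw [zpow_add₀ Complex.I_ne_zero, zpow_add₀ Complex.I_ne_zero,
    zpow_add₀ Complex.I_ne_zero, I_zpow_two_mul, I_zpow_four_mul, mul_one]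

lemma epsF_sq (hJs : J.IsSymm) (hMs : M.IsSymm) (hMe : ∀ i, 2 ∣ M i i)
    (x : Matrix (Fin r) (Fin d) (ZMod 2)) :
    epsF J M x * epsF J M x = 1 := by
  obtain ⟨k, hk⟩ := trace_even J M hJs hMs hMe (intLift x)
  unfold epsF CCC
  rw [hk, I_zpow_two_mul, ← negOne_add, show k + k = 2*k by ring, negOne_even ⟨k, rfl⟩]

lemma epsF_zero : epsF J M 0 = 1 := by
  have h0 : intLift (0 : Matrix (Fin r) (Fin d) (ZMod 2)) = 0 := by
    ext i k; simp [intLift]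
  unfold epsF CCC
  rw [h0]
  simp

/-- Mod 2 reduction of column dot products. -/
lemma castColDot (x y : Matrix (Fin r) (Fin d) (ZMod 2)) (k l : Fin d) :
    ((∑ i, ∑ j, intLift x i k * J i j * intLift y j l : ℤ) : ZMod 2) =
      PhiF J (fun i => x i k) (fun j => y j l) := by
  unfold PhiF
  push_cast
  refine Finset.sum_congr rfl fun i _ => Finset.sum_congr rfl fun j _ => ?_
  simp only [intLift, Matrix.map_apply, Int.cast_mul, val_intCast_two]

lemma CCC_add_right (hJs : J.IsSymm) (hMs : M.IsSymm)
    (x w w' : Matrix (Fin r) (Fin d) (ZMod 2)) :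
    ∃ c : ℤ, CCC J M x (w + w') = CCC J M x w + CCC J M x w' + 2*c := by
  unfold CCC
  rw [intLift_add]
  refine ⟨Matrix.trace ((intLift x)ᵀ * J *
    (Matrix.of fun i k => -(((w i k).val : ℤ) * ((w' i k).val : ℤ))) * M), ?_⟩
  simp only [Matrix.mul_add, Matrix.add_mul, Matrix.mul_smul, Matrix.smul_mul,
    Matrix.trace_add, Matrix.trace_smul, smul_eq_mul]

lemma CCC_add_left (hJs : J.IsSymm) (hMs : M.IsSymm)
    (w w' y : Matrix (Fin r) (Fin d) (ZMod 2)) :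
    ∃ c : ℤ, CCC J M (w + w') y = CCC J M w y + CCC J M w' y + 2*c := by
  unfold CCC
  rw [intLift_add]
  refine ⟨Matrix.trace ((Matrix.of fun i k =>
    -(((w i k).val : ℤ) * ((w' i k).val : ℤ)))ᵀ * J * intLift y * M), ?_⟩
  simp only [Matrix.transpose_add, Matrix.transpose_smul, Matrix.mul_add, Matrix.add_mul,
    Matrix.mul_smul, Matrix.smul_mul, Matrix.trace_add, Matrix.trace_smul, smul_eq_mul]

lemma CCC_swap (hJs : J.IsSymm) (hMs : M.IsSymm)
    (x y : Matrix (Fin r) (Fin d) (ZMod 2)) :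
    CCC J M x y = CCC J M y x := by
  unfold CCC
  exact (traceCross J M hJs hMs (intLift x) (intLift y)).symm

/-- Characters on matrices with columns in an isotropic space are trivial. -/
lemma epsF_one_of_isotropic (hJs : J.IsSymm) (hMs : M.IsSymm) (hMe : ∀ i, 2 ∣ M i i)
    (W : Submodule (ZMod 2) (Fin r → ZMod 2))
    (hWiso : ∀ u ∈ W, ∀ v ∈ W, PhiF J u v = 0)
    (w : Matrix (Fin r) (Fin d) (ZMod 2)) (hw : ∀ k, (fun i => w i k) ∈ W) :
    epsF J M w = 1 := by
  have h4 : 4 ∣ CCC J M w w := by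
    unfold CCC
    refine trace_four J M hJs hMs hMe (intLift w) ?_
    intro k l
    rw [two_dvd_iff_cast, castColDot]
    exact hWiso _ (hw k) _ (hw l)
  obtain ⟨c, hc⟩ := h4
  unfold epsF
  rw [hc, I_zpow_four_mul]

lemma CCC_even_of_cols (hJs : J.IsSymm) (hMs : M.IsSymm)
    (W : Submodule (ZMod 2) (Fin r → ZMod 2))
    (hWiso : ∀ u ∈ W, ∀ v ∈ W, PhiF J u v = 0)
    (x y : Matrix (Fin r) (Fin d) (ZMod 2))
    (hx : ∀ k, (fun i => x i k) ∈ W) (hy : ∀ k, (fun i => y i k) ∈ W) :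
    2 ∣ CCC J M x y := by
  rw [two_dvd_iff_cast]
  unfold CCC
  rw [castCC]
  refine Finset.sum_eq_zero fun k _ => ?_
  refine Finset.sum_eq_zero fun l _ => ?_
  rw [show (∑ i, ∑ j, x i k * (J i j : ZMod 2) * y j l)
    = PhiF J (fun i => x i k) (fun j => y j l) from rfl]
  rw [hWiso _ (hx k) _ (hy l), zero_mul]

/-- If `x` pairs evenly with all `cT c k0` for `c ∈ U`, its columns are
`PhiF`-orthogonal to `U`. -/
lemma cols_orth_of_even (hMu : IsUnit ((M.map (Int.cast : ℤ → ZMod 2)).det))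
    (x : Matrix (Fin r) (Fin d) (ZMod 2)) (U : Set (Fin r → ZMod 2))
    (h : ∀ c ∈ U, ∀ k0, 2 ∣ CCC J M x (cT c k0)) :
    ∀ k, ∀ c ∈ U, PhiF J (fun i => x i k) c = 0 := by
  intro k c hc
  have hψ : (fun kk => PhiF J (fun i => x i kk) c * 1) = 0 → PhiF J (fun i => x i k) c = 0 := by
    intro h0
    have := congrFun h0 k
    simpa using this
  -- consider ψ : Fin d → ZMod 2
  set ψ : Fin d → ZMod 2 := fun kk => PhiF J (fun i => x i kk) c with hψdef
  have hmv : (M.map (Int.cast : ℤ → ZMod 2)) *ᵥ ψ = 0 := by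
    funext k0
    have h1 := h c hc k0
    rw [two_dvd_iff_cast] at h1
    unfold CCC at h1
    rw [castCC_cT] at h1
    show (M.map (Int.cast : ℤ → ZMod 2) *ᵥ ψ) k0 = (0 : ZMod 2)
    calc (M.map (Int.cast : ℤ → ZMod 2) *ᵥ ψ) k0
        = ∑ kk, PhiF J (fun i => x i kk) c * (M k0 kk : ZMod 2) := by
          rw [Matrix.mulVec, dotProduct]
          exact Finset.sum_congr rfl fun kk _ => by
            simp [Matrix.map_apply, hψdef, mul_comm]
      _ = 0 := h1
  have := vanish_of_mulVec _ hMu ψ hmv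
  have := congrFun this k
  simpa [hψdef] using this

end EpsLevel

section Main

lemma card_matrix_zmod (r d : ℕ) :
    Fintype.card (Matrix (Fin r) (Fin d) (ZMod 2)) = 2^(r*d) := by
  have e : Matrix (Fin r) (Fin d) (ZMod 2) ≃ (Fin r → Fin d → ZMod 2) := Equiv.refl _
  rw [Fintype.card_congr e]
  rw [Fintype.card_fun]
  have : Fintype.card (Fin d → ZMod 2) = 2^d := by
    rw [Fintype.card_fun]
    simp
  rw [this, Fintype.card_fin, ← pow_mul, Nat.mul_comm d r]

lemma mainCount (r d : ℕ) (hd : 0 < d)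
    (J : Matrix (Fin r) (Fin r) ℤ) (M : Matrix (Fin d) (Fin d) ℤ)
    (hJs : J.IsSymm) (hMs : M.IsSymm)
    (hJe : ∀ i, 2 ∣ J i i) (hMe : ∀ i, 2 ∣ M i i)
    (hJu : IsUnit ((J.map (Int.cast : ℤ → ZMod 2)).det))
    (hMu : IsUnit ((M.map (Int.cast : ℤ → ZMod 2)).det)) :
    Even r ∧ (∑ x : Matrix (Fin r) (Fin d) (ZMod 2), epsF J M x) = (2:ℂ)^(r*d/2) := by
  classical
  obtain ⟨W, hWiso, hWmax⟩ := exists_max_isotropic J hJs hJe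
  set WM : Submodule (ZMod 2) (Matrix (Fin r) (Fin d) (ZMod 2)) := WMsub W with hWM
  set S := ∑ x : Matrix (Fin r) (Fin d) (ZMod 2), epsF J M x with hS
  have hmem : ∀ x : Matrix (Fin r) (Fin d) (ZMod 2),
      x ∈ WM ↔ ∀ k, (fun i => x i k) ∈ W := fun x => Iff.rfl
  have heps1 : ∀ w ∈ WM, epsF J M w = 1 := fun w hw =>
    epsF_one_of_isotropic J M hJs hMs hMe W hWiso w hw
  have hpair : ∀ x ∈ WM, ∀ w ∈ WM, (-1:ℂ)^(CCC J M x w) = 1 := fun x hx w hw =>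
    negOne_even (CCC_even_of_cols J M hJs hMs W hWiso x w hx hw)
  have hodd : ∀ x : Matrix (Fin r) (Fin d) (ZMod 2), x ∉ WM →
      ∃ w0, w0 ∈ WM ∧ (-1:ℂ)^(CCC J M x w0) = -1 := by
    intro x hx
    by_contra hcon
    push_neg at hcon
    have hev : ∀ c ∈ (W : Set (Fin r → ZMod 2)), ∀ k0, 2 ∣ CCC J M x (cT c k0) := by
      intro c hc k0
      by_contra hoddd
      exact hcon (cT c k0) (cT_mem W c hc k0) (negOne_odd hoddd)
    have horth := cols_orth_of_even J M hMu x (W : Set (Fin r → ZMod 2)) hev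
    refine hx ((hmem x).2 fun k => hWmax _ fun w hw => ?_)
    rw [PhiF_symm J hJs]
    exact horth k w hw
  -- the inner character sum
  have hN : ∀ x : Matrix (Fin r) (Fin d) (ZMod 2),
      (∑ w : WM, (-1:ℂ)^(CCC J M x (w : Matrix (Fin r) (Fin d) (ZMod 2)))) =
      if x ∈ WM then (Fintype.card WM : ℂ) else 0 := by
    intro x
    by_cases hx : x ∈ WM
    · rw [if_pos hx]
      rw [Finset.sum_congr rfl (fun w _ => hpair x hx w.1 w.2)]
      simp [Finset.card_univ]
    · rw [if_neg hx]
      obtain ⟨w0, hw0, hw0odd⟩ := hodd x hx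
      have hterm : ∀ w : WM, (-1:ℂ)^(CCC J M x ((w + ⟨w0,hw0⟩ : WM) : Matrix (Fin r) (Fin d) (ZMod 2))) =
          -((-1:ℂ)^(CCC J M x (w : Matrix (Fin r) (Fin d) (ZMod 2)))) := by
        intro w
        have hcoe : ((w + ⟨w0,hw0⟩ : WM) : Matrix (Fin r) (Fin d) (ZMod 2)) =
            (w : Matrix (Fin r) (Fin d) (ZMod 2)) + w0 := rfl
        rw [hcoe]
        obtain ⟨c, hc⟩ := CCC_add_right J M hJs hMs x (w : Matrix (Fin r) (Fin d) (ZMod 2)) w0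
        rw [hc, negOne_add, negOne_add, hw0odd, negOne_even ⟨c, rfl⟩]
        ring
      have hre : (∑ w : WM, (-1:ℂ)^(CCC J M x ((w + ⟨w0,hw0⟩ : WM) : Matrix (Fin r) (Fin d) (ZMod 2)))) =
          ∑ w : WM, (-1:ℂ)^(CCC J M x (w : Matrix (Fin r) (Fin d) (ZMod 2))) :=
        Fintype.sum_equiv (Equiv.addRight (⟨w0,hw0⟩ : WM)) _ _ (fun w => by simp)
      have hflip : (∑ w : WM, (-1:ℂ)^(CCC J M x (w : Matrix (Fin r) (Fin d) (ZMod 2)))) =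
          -(∑ w : WM, (-1:ℂ)^(CCC J M x (w : Matrix (Fin r) (Fin d) (ZMod 2)))) := by
        conv_lhs => rw [← hre]
        rw [Finset.sum_congr rfl fun w _ => hterm w]
        rw [← Finset.sum_neg_distrib]
      have h2 : (2:ℂ) * (∑ w : WM, (-1:ℂ)^(CCC J M x (w : Matrix (Fin r) (Fin d) (ZMod 2)))) = 0 := by
        linear_combination hflip
      exact (mul_eq_zero.mp h2).resolve_left two_ne_zero
  have hnemp : Nonempty WM := ⟨0⟩
  -- main identity
  have hmain : (Fintype.card WM : ℂ) * S = (Fintype.card WM : ℂ) * (Fintype.card WM : ℂ) := by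
    have step1 : (Fintype.card WM : ℂ) * S = ∑ w : WM, S := by
      rw [Finset.sum_const, Finset.card_univ, nsmul_eq_mul]
    have step2 : ∀ w : WM, S = ∑ x : Matrix (Fin r) (Fin d) (ZMod 2),
        epsF J M (x + (w : Matrix (Fin r) (Fin d) (ZMod 2))) := by
      intro w
      rw [hS]
      exact (Fintype.sum_equiv (Equiv.addRight (w : Matrix (Fin r) (Fin d) (ZMod 2)))
        (fun x => epsF J M (x + (w : Matrix (Fin r) (Fin d) (ZMod 2)))) (epsF J M)
        (fun x => by simp)).symm
    have step3 : (Fintype.card WM : ℂ) * S =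
        ∑ x : Matrix (Fin r) (Fin d) (ZMod 2), ∑ w : WM,
          epsF J M (x + (w : Matrix (Fin r) (Fin d) (ZMod 2))) := by
      rw [step1, Finset.sum_congr rfl fun w _ => step2 w, Finset.sum_comm]
    rw [step3]
    have step4 : ∀ x : Matrix (Fin r) (Fin d) (ZMod 2), ∀ w : WM,
        epsF J M (x + (w : Matrix (Fin r) (Fin d) (ZMod 2))) =
          epsF J M x * (-1:ℂ)^(CCC J M x (w : Matrix (Fin r) (Fin d) (ZMod 2))) := by
      intro x w
      rw [epsF_add J M hJs hMs, heps1 _ w.2, mul_one]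
    calc ∑ x : Matrix (Fin r) (Fin d) (ZMod 2), ∑ w : WM,
          epsF J M (x + (w : Matrix (Fin r) (Fin d) (ZMod 2)))
        = ∑ x : Matrix (Fin r) (Fin d) (ZMod 2),
            epsF J M x * ∑ w : WM, (-1:ℂ)^(CCC J M x (w : Matrix (Fin r) (Fin d) (ZMod 2))) := by
          refine Finset.sum_congr rfl fun x _ => ?_
          rw [Finset.mul_sum]
          exact Finset.sum_congr rfl fun w _ => step4 x w
      _ = ∑ x : Matrix (Fin r) (Fin d) (ZMod 2),
            (if x ∈ WM then (Fintype.card WM : ℂ) else 0) := by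
          refine Finset.sum_congr rfl fun x _ => ?_
          rw [hN x]
          by_cases hx : x ∈ WM
          · simp only [if_pos hx]
            rw [heps1 x hx, one_mul]
          · simp only [if_neg hx, mul_zero]
      _ = (Fintype.card WM : ℂ) * (Fintype.card WM : ℂ) := by
          rw [← Finset.sum_filter, Finset.sum_const, nsmul_eq_mul]
          congr 1
          rw [← Fintype.card_subtype]
  have hcard0 : (Fintype.card WM : ℂ) ≠ 0 := Nat.cast_ne_zero.2 Fintype.card_ne_zero
  have hSval : S = (Fintype.card WM : ℂ) := mul_left_cancel₀ hcard0 hmain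
  -- the square identity
  have hCCCzero : ∀ x : Matrix (Fin r) (Fin d) (ZMod 2), CCC J M x 0 = 0 := by
    intro x
    unfold CCC
    have h0 : intLift (0 : Matrix (Fin r) (Fin d) (ZMod 2)) = 0 := by
      ext i k; simp [intLift]
    rw [h0, Matrix.mul_zero, Matrix.zero_mul, Matrix.trace_zero]
  have hSsq : S * S = (2:ℂ)^(r*d) := by
    have e1 : S * S = ∑ x : Matrix (Fin r) (Fin d) (ZMod 2),
        ∑ y : Matrix (Fin r) (Fin d) (ZMod 2), epsF J M x * epsF J M y := by
      rw [hS, Finset.sum_mul_sum]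
    have e2 : ∀ x : Matrix (Fin r) (Fin d) (ZMod 2),
        (∑ y : Matrix (Fin r) (Fin d) (ZMod 2), epsF J M x * epsF J M y) =
        ∑ z : Matrix (Fin r) (Fin d) (ZMod 2), epsF J M z * (-1:ℂ)^(CCC J M x z) := by
      intro x
      have := Fintype.sum_equiv (Equiv.addLeft x)
        (fun z => epsF J M x * epsF J M (x + z))
        (fun y => epsF J M x * epsF J M y) (fun z => by simp)
      rw [← this]
      refine Finset.sum_congr rfl fun z _ => ?_
      show epsF J M x * epsF J M (x + z) = epsF J M z * (-1:ℂ)^(CCC J M x z)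
      rw [epsF_add J M hJs hMs]
      have := epsF_sq J M hJs hMs hMe x
      calc epsF J M x * (epsF J M x * epsF J M z * (-1:ℂ)^(CCC J M x z))
          = (epsF J M x * epsF J M x) * (epsF J M z * (-1:ℂ)^(CCC J M x z)) := by ring
        _ = epsF J M z * (-1:ℂ)^(CCC J M x z) := by rw [this, one_mul]
    have e3 : S * S = ∑ z : Matrix (Fin r) (Fin d) (ZMod 2),
        (∑ x : Matrix (Fin r) (Fin d) (ZMod 2), (-1:ℂ)^(CCC J M x z)) * epsF J M z := by
      rw [e1, Finset.sum_congr rfl fun x _ => e2 x, Finset.sum_comm]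
      refine Finset.sum_congr rfl fun z _ => ?_
      rw [Finset.sum_mul]
      exact Finset.sum_congr rfl fun x _ => by ring
    rw [e3]
    have hz0 : ∀ z : Matrix (Fin r) (Fin d) (ZMod 2), z ≠ 0 →
        (∑ x : Matrix (Fin r) (Fin d) (ZMod 2), (-1:ℂ)^(CCC J M x z)) * epsF J M z = 0 := by
      intro z hz
      have hoddz : ∃ x0 : Matrix (Fin r) (Fin d) (ZMod 2), ¬ 2 ∣ CCC J M x0 z := by
        by_contra hcon
        push_neg at hcon
        have hev : ∀ c ∈ (Set.univ : Set (Fin r → ZMod 2)), ∀ k0,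
            2 ∣ CCC J M z (cT c k0) := by
          intro c _ k0
          rw [CCC_swap J M hJs hMs]
          exact hcon (cT c k0)
        have horth := cols_orth_of_even J M hMu z Set.univ hev
        refine hz ?_
        ext i k
        have hcol : (fun i => z i k) = 0 := by
          refine PhiF_nondeg J hJu _ fun c => ?_
          exact horth k c (Set.mem_univ c)
        exact congrFun hcol i
      obtain ⟨x0, hx0⟩ := hoddz
      have hterm : ∀ x : Matrix (Fin r) (Fin d) (ZMod 2),
          (-1:ℂ)^(CCC J M (x + x0) z) = -((-1:ℂ)^(CCC J M x z)) := by
        intro x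
        obtain ⟨c, hc⟩ := CCC_add_left J M hJs hMs x x0 z
        rw [hc, negOne_add, negOne_add, negOne_odd hx0, negOne_even ⟨c, rfl⟩]
        ring
      have hre : (∑ x : Matrix (Fin r) (Fin d) (ZMod 2), (-1:ℂ)^(CCC J M (x + x0) z)) =
          ∑ x : Matrix (Fin r) (Fin d) (ZMod 2), (-1:ℂ)^(CCC J M x z) :=
        Fintype.sum_equiv (Equiv.addRight x0) _ _ (fun x => by simp)
      have hflip : (∑ x : Matrix (Fin r) (Fin d) (ZMod 2), (-1:ℂ)^(CCC J M x z)) =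
          -(∑ x : Matrix (Fin r) (Fin d) (ZMod 2), (-1:ℂ)^(CCC J M x z)) := by
        conv_lhs => rw [← hre]
        rw [Finset.sum_congr rfl fun x _ => hterm x]
        rw [← Finset.sum_neg_distrib]
      have h2 : (2:ℂ) * (∑ x : Matrix (Fin r) (Fin d) (ZMod 2), (-1:ℂ)^(CCC J M x z)) = 0 := by
        linear_combination hflip
      rw [(mul_eq_zero.mp h2).resolve_left two_ne_zero, zero_mul]
    rw [Fintype.sum_eq_single 0 hz0]
    have : ∀ x : Matrix (Fin r) (Fin d) (ZMod 2), (-1:ℂ)^(CCC J M x (0:Matrix (Fin r) (Fin d) (ZMod 2))) = 1 := by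
      intro x
      rw [hCCCzero x, zpow_zero]
    rw [Finset.sum_congr rfl fun x _ => this x, Finset.sum_const, Finset.card_univ,
      card_matrix_zmod, epsF_zero, mul_one, nsmul_eq_mul, mul_one]
    push_cast
    ring
  -- cardinality of WM
  have hcardWM : Fintype.card WM = Fintype.card W ^ d := by
    have e : WM ≃ (Fin d → W) :=
      { toFun := fun x k => ⟨fun i => (x : Matrix (Fin r) (Fin d) (ZMod 2)) i k, x.2 k⟩
        invFun := fun f => ⟨Matrix.of fun i k => (f k : Fin r → ZMod 2) i, fun k => by
          simpa using (f k).2⟩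
        left_inv := fun x => by ext i k; rfl
        right_inv := fun f => by funext k; ext i; rfl }
    rw [Fintype.card_congr e, Fintype.card_fun, Fintype.card_fin]
  -- number crunching
  set cW := Fintype.card W with hcW
  have hnat : (Fintype.card WM)^2 = 2^(r*d) := by
    have : ((Fintype.card WM : ℂ))^2 = ((2:ℂ))^(r*d) := by
      rw [pow_two, ← hSval, hSsq]
    have h2 : (((Fintype.card WM)^2 : ℕ) : ℂ) = (((2^(r*d)) : ℕ) : ℂ) := by
      push_cast
      exact this
    exact_mod_cast h2
  have hWpow : cW^(d*2) = 2^(r*d) := by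
    rw [← hnat, hcardWM, ← pow_mul]
  have hdvd : cW ∣ 2^(r*d) := by
    rw [← hWpow]
    exact dvd_pow_self cW (by omega)
  obtain ⟨m, hmle, hm⟩ := (Nat.dvd_prime_pow Nat.prime_two).1 hdvd
  have hexp : m*(d*2) = r*d := by
    refine Nat.pow_right_injective (le_refl 2) ?_
    show (2:ℕ)^(m*(d*2)) = 2^(r*d)
    rw [pow_mul, ← hm, hWpow]
  have hr2m : r = 2*m := by
    have h' : (2*m)*d = r*d := by
      calc (2*m)*d = m*(d*2) := by ring
        _ = r*d := hexp
    exact (Nat.eq_of_mul_eq_mul_right hd h').symm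
  constructor
  · exact ⟨m, by omega⟩
  · rw [hSval]
    have : Fintype.card WM = 2^(m*d) := by
      rw [hcardWM, hm, ← pow_mul]
    rw [this]
    have hrd : r*d = 2*(m*d) := by rw [hr2m]; ring
    have hhalf : r*d/2 = m*d := by rw [hrd]; omega
    rw [hhalf]
    push_cast
    ring

end Main

lemma exp_eq_I_zpow (n : ℤ) :
    Complex.exp ((Real.pi:ℂ) * Complex.I * ((n:ℂ)/2)) = Complex.I ^ n := by
  have h : (Real.pi:ℂ) * Complex.I * ((n:ℂ)/2) = n * ((Real.pi:ℂ)/2 * Complex.I) := by ring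
  rw [h, Complex.exp_int_mul]
  rw [show Complex.exp ((Real.pi:ℂ)/2 * Complex.I) = Complex.I from by
    rw [Complex.exp_mul_I]; simp]

lemma GS_eq_epsSum {r d : ℕ} (J : Matrix (Fin r) (Fin r) ℤ) (M : Matrix (Fin d) (Fin d) ℤ) :
    GS r d 2 J M = ∑ x : Matrix (Fin r) (Fin d) (ZMod 2), epsF J M x := by
  unfold GS
  refine Fintype.sum_equiv
    ((Equiv.refl _) : Matrix (Fin r) (Fin d) (Fin 2) ≃ Matrix (Fin r) (Fin d) (ZMod 2))
    _ _ fun x => ?_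
  simp only [Equiv.refl_apply]
  have hlift : (x.map fun a => ((a : ℕ) : ℤ)) = intLift x := by
    ext i k
    simp only [intLift, Matrix.map_apply]
    rfl
  rw [hlift]
  unfold epsF CCC
  rw [show ((2:ℕ):ℂ) = (2:ℂ) by norm_num]
  exact exp_eq_I_zpow _

lemma GS_transpose {r d : ℕ} (J : Matrix (Fin r) (Fin r) ℤ) (M : Matrix (Fin d) (Fin d) ℤ) :
    GS r d 2 J M = GS d r 2 M J := by
  unfold GS
  refine Fintype.sum_equiv
    (⟨Matrix.transpose, Matrix.transpose, fun x => rfl, fun x => rfl⟩ :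
      Matrix (Fin r) (Fin d) (Fin 2) ≃ Matrix (Fin d) (Fin r) (Fin 2)) _ _ fun x => ?_
  congr 2
  have hmap : (xᵀ.map fun a => ((a : ℕ) : ℤ)) = (x.map fun a => ((a : ℕ) : ℤ))ᵀ := rfl
  show ((Matrix.trace ((x.map fun a => ((a : ℕ) : ℤ))ᵀ * J *
      (x.map fun a => ((a : ℕ) : ℤ)) * M) : ℤ) : ℂ) / ((2:ℕ) : ℂ) =
    ((Matrix.trace ((xᵀ.map fun a => ((a : ℕ) : ℤ))ᵀ * M *
      (xᵀ.map fun a => ((a : ℕ) : ℤ)) * J) : ℤ) : ℂ) / ((2:ℕ) : ℂ)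
  rw [hmap, Matrix.transpose_transpose]
  set X := x.map fun a => ((a : ℕ) : ℤ) with hX
  congr 2
  calc Matrix.trace (Xᵀ * J * X * M) = Matrix.trace ((Xᵀ * J) * (X * M)) := by
        rw [Matrix.mul_assoc]
    _ = Matrix.trace ((X * M) * (Xᵀ * J)) := Matrix.trace_mul_comm _ _
    _ = Matrix.trace (X * M * Xᵀ * J) := by simp only [Matrix.mul_assoc]


/-- If `J'` and `M'` are even integral symmetric matrices (even diagonal) invertible
mod 2, then `r` and `d` are even and `G_{J',M'}(2) = 2^{rd/2}`. -/
theorem gauss_sum_two_even_even (r d : ℕ) (hr : 0 < r) (hd : 0 < d)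
    (J : Matrix (Fin r) (Fin r) ℤ) (M : Matrix (Fin d) (Fin d) ℤ)
    (hJs : J.IsSymm) (hMs : M.IsSymm)
    (hJe : ∀ i, 2 ∣ J i i) (hMe : ∀ i, 2 ∣ M i i)
    (hJu : IsUnit ((J.map (Int.cast : ℤ → ZMod 2)).det))
    (hMu : IsUnit ((M.map (Int.cast : ℤ → ZMod 2)).det)) :
    Even r ∧ Even d ∧ GS r d 2 J M = (2 : ℂ) ^ (r * d / 2) := by
  have h1 := mainCount r d hd J M hJs hMs hJe hMe hJu hMu
  have h2 := mainCount d r hr M J hMs hJs hMe hJe hMu hJu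
  refine ⟨h1.1, h2.1, ?_⟩
  rw [GS_eq_epsSum]
  exact h1.2
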